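/- (Coefficient form of Theorem 1.1(2): the relation A^{BKP}(w,z) = ¼(z·A^{KP}(w,−z) − w·A^{KP}(z,−w)) between the generating series of BKP affine coordinates and of the induced KP affine coordinates.) With TwoA_B, P and Q defined as in the context from a family a satisfying a(m,n) = −a(n,m), one has the identity TwoA_B = P − Q in the formal power series ring R[[u,v]]. -/

import Mathlib

/-- Coefficient form of Theorem 1.1(2): the relation
`A^{BKP}(w,z) = ¼(z·A^{KP}(w,−z) − w·A^{KP}(z,−w))` between the generating series of the
BKP affine coordinates and of the induced KP affine coordinates, stated in the formal power
series ring `R[[u,v]]` (with `u, v` playing the roles of `w⁻¹, z⁻¹`); the series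
`TwoA_B` (= twice `A^{BKP}`), `P` (= `½·z·A^{KP}(w,−z)`) and `Q` (= `½·w·A^{KP}(z,−w)`)
are specified by their coefficients, `u` being the variable `0` and `v` the variable `1`. -/
theorem twoA_BKP_eq_P_sub_Q {R : Type*} [CommRing R] (a : ℕ × ℕ → R)
    (ha : ∀ m n : ℕ, a (m, n) = - a (n, m))
    (TwoA_B P Q : MvPowerSeries (Fin 2) R)
    -- `TwoA_B = Σ_{n≥1, m≥0} (−1)^{m+n+1} a(n,m) uⁿ vᵐ + Σ_{n≥0, m≥1} (−1)^{m+n+1} a(n,m) uⁿ vᵐ`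
    (hT : ∀ n m : ℕ,
      MvPowerSeries.coeff (Finsupp.single (0 : Fin 2) n + Finsupp.single (1 : Fin 2) m) TwoA_B
        = (if 1 ≤ n then (-1 : R) ^ (m + n + 1) * a (n, m) else 0)
          + (if 1 ≤ m then (-1 : R) ^ (m + n + 1) * a (n, m) else 0))
    -- `P = Σ_{m≥1} (−1)^{m+1} a(m,0) uᵐ + Σ_{m≥1, n≥1} (−1)^{m+n+1} (a(m,n) + a(m,0)·a(0,n)) uᵐ vⁿ`
    (hP : ∀ m n : ℕ,
      MvPowerSeries.coeff (Finsupp.single (0 : Fin 2) m + Finsupp.single (1 : Fin 2) n) P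
        = (if 1 ≤ m ∧ n = 0 then (-1 : R) ^ (m + 1) * a (m, 0) else 0)
          + (if 1 ≤ m ∧ 1 ≤ n then
              (-1 : R) ^ (m + n + 1) * (a (m, n) + a (m, 0) * a (0, n)) else 0))
    -- `Q = Σ_{n≥1} (−1)^{n+1} a(n,0) vⁿ + Σ_{m≥1, n≥1} (−1)^{m+n+1} (a(n,m) + a(n,0)·a(0,m)) uᵐ vⁿ`
    (hQ : ∀ m n : ℕ,
      MvPowerSeries.coeff (Finsupp.single (0 : Fin 2) m + Finsupp.single (1 : Fin 2) n) Q
        = (if m = 0 ∧ 1 ≤ n then (-1 : R) ^ (n + 1) * a (n, 0) else 0)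
          + (if 1 ≤ m ∧ 1 ≤ n then
              (-1 : R) ^ (m + n + 1) * (a (n, m) + a (n, 0) * a (0, m)) else 0)) :
    TwoA_B = P - Q := by
  ext d
  have hd : d = Finsupp.single (0 : Fin 2) (d 0) + Finsupp.single (1 : Fin 2) (d 1) := by
    ext i; fin_cases i <;> simp
  rw [map_sub, hd, hT (d 0) (d 1), hP (d 0) (d 1), hQ (d 0) (d 1)]
  set n := d 0 with hn'; set m := d 1 with hm'
  clear_value n m
  rcases n with _ | n <;> rcases m with _ | m <;>
      simp only [Nat.le_zero, Nat.succ_ne_zero, Nat.one_le_iff_ne_zero, ne_eq,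
        not_true_eq_false, not_false_eq_true, if_true, if_false, and_true, true_and,
        and_false, false_and, and_self, zero_add, add_zero, sub_zero, zero_sub]
  case zero.succ => linear_combination (-1 : R) ^ (m + 1 + 1) * ha 0 (m + 1)
  case succ.succ => linear_combination (-1 : R) ^ (m + n + 3) * (ha (m + 1) (n + 1)
        + a (0, n + 1) * ha (m + 1) 0 - a (0, m + 1) * ha (n + 1) 0)
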